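/- (Decoupling of the unfrustrated dynamics along the Hodge decomposition.) Let A be a real n × p matrix and B a real q × n matrix with B·A = 0. In Euclidean ℝⁿ, let P_g, P_c and P_h be the orthogonal projections onto, respectively, the range of x ↦ A·x, the range of x ↦ Bᵀ·x, and the kernel of x ↦ (A·Aᵀ + Bᵀ·B)·x. Define the simplicial Kuramoto vector field K(θ) := −A·sin(Aᵀ·θ) − Bᵀ·sin(B·θ). Then for every θ ∈ ℝⁿ: P_g(K(θ)) = −A·sin(Aᵀ·(P_g θ)), P_c(K(θ)) = −Bᵀ·sin(B·(P_c θ)), and P_h(K(θ)) = 0. Hence without frustration the gradient, curl and harmonic projections of the dynamics evolve independently. -/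

import Mathlib

open Matrix

private lemma dotmv {m n : ℕ} (M : Matrix (Fin m) (Fin n) ℝ) (v : Fin m → ℝ)
    (w : Fin n → ℝ) : (Mᵀ *ᵥ v) ⬝ᵥ w = v ⬝ᵥ (M *ᵥ w) := by
  rw [mulVec_transpose, ← dotProduct_mulVec]

private lemma dotmv' {m n : ℕ} (M : Matrix (Fin m) (Fin n) ℝ) (v : Fin m → ℝ)
    (w : Fin n → ℝ) : (M *ᵥ w) ⬝ᵥ v = w ⬝ᵥ (Mᵀ *ᵥ v) := by
  rw [dotProduct_comm, ← dotmv, dotProduct_comm]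

private lemma dot_self_nonneg {n : ℕ} (v : Fin n → ℝ) : 0 ≤ v ⬝ᵥ v :=
  Finset.sum_nonneg fun _ _ => mul_self_nonneg _

/-- Decoupling of the unfrustrated simplicial Kuramoto dynamics along the Hodge
decomposition: the gradient, curl and harmonic projections of the vector field only depend
on the corresponding projections of the phase, and the harmonic projection vanishes. -/
theorem unfrustrated_hodge_decoupling (n p q : ℕ)
    (A : Matrix (Fin n) (Fin p) ℝ) (B : Matrix (Fin q) (Fin n) ℝ)
    (hBA : B * A = 0)
    (G C H : Submodule ℝ (EuclideanSpace ℝ (Fin n)))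
    (hG : ∀ x : EuclideanSpace ℝ (Fin n), x ∈ G ↔ ∃ y : Fin p → ℝ, A *ᵥ y = x)
    (hC : ∀ x : EuclideanSpace ℝ (Fin n), x ∈ C ↔ ∃ z : Fin q → ℝ, Bᵀ *ᵥ z = x)
    (hH : ∀ x : EuclideanSpace ℝ (Fin n), x ∈ H ↔ (A * Aᵀ + Bᵀ * B) *ᵥ x = 0) :
    let K : EuclideanSpace ℝ (Fin n) → EuclideanSpace ℝ (Fin n) := fun θ =>
      WithLp.toLp 2 (-(A *ᵥ fun i => Real.sin ((Aᵀ *ᵥ θ) i)) - Bᵀ *ᵥ fun j => Real.sin ((B *ᵥ θ) j))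
    ∀ θ : EuclideanSpace ℝ (Fin n),
      (Submodule.orthogonalProjectionOnto G (K θ) : EuclideanSpace ℝ (Fin n)) =
        -(A *ᵥ fun i =>
          Real.sin ((Aᵀ *ᵥ (Submodule.orthogonalProjectionOnto G θ : EuclideanSpace ℝ (Fin n))) i)) ∧
      (Submodule.orthogonalProjectionOnto C (K θ) : EuclideanSpace ℝ (Fin n)) =
        -(Bᵀ *ᵥ fun j =>
          Real.sin ((B *ᵥ (Submodule.orthogonalProjectionOnto C θ : EuclideanSpace ℝ (Fin n))) j)) ∧
      (Submodule.orthogonalProjectionOnto H (K θ) : EuclideanSpace ℝ (Fin n)) = 0 := by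
  intro K θ
  have inner_dot : ∀ x y : EuclideanSpace ℝ (Fin n), (inner ℝ x y : ℝ) = x ⬝ᵥ y := by
    intro x y
    simp [PiLp.inner_apply, dotProduct, mul_comm]
  -- Aᵀ kills Gᗮ
  have hAtG : ∀ x : EuclideanSpace ℝ (Fin n), x ∈ Gᗮ → Aᵀ *ᵥ x = 0 := by
    intro x hx
    have hm : (WithLp.toLp 2 (A *ᵥ (Aᵀ *ᵥ x)) : EuclideanSpace ℝ (Fin n)) ∈ G := (hG _).2 ⟨_, rfl⟩
    have h0 := (Submodule.mem_orthogonal G x).1 hx _ hm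
    rw [inner_dot, dotProduct_comm, ← dotmv A x (Aᵀ *ᵥ x)] at h0
    exact dotProduct_self_eq_zero.1 h0
  have hBC : ∀ x : EuclideanSpace ℝ (Fin n), x ∈ Cᗮ → B *ᵥ x = 0 := by
    intro x hx
    have hm : (WithLp.toLp 2 (Bᵀ *ᵥ (B *ᵥ x)) : EuclideanSpace ℝ (Fin n)) ∈ C := (hC _).2 ⟨_, rfl⟩
    have h0 := (Submodule.mem_orthogonal C x).1 hx _ hm
    rw [inner_dot, dotProduct_comm, ← dotmv' B (B *ᵥ x) x] at h0
    exact dotProduct_self_eq_zero.1 h0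
  -- H elements are killed by Aᵀ and B
  have hHker : ∀ x : EuclideanSpace ℝ (Fin n), x ∈ H → Aᵀ *ᵥ x = 0 ∧ B *ᵥ x = 0 := by
    intro x hx
    have h0 : (A * Aᵀ + Bᵀ * B) *ᵥ x = 0 := (hH x).1 hx
    have h1 : (x ⬝ᵥ ((A * Aᵀ + Bᵀ * B) *ᵥ x) : ℝ) = 0 := by rw [h0]; simp
    have h2 : ((Aᵀ *ᵥ x) ⬝ᵥ (Aᵀ *ᵥ x) : ℝ) + ((B *ᵥ x) ⬝ᵥ (B *ᵥ x) : ℝ) = 0 := by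
      rw [← h1, add_mulVec, dotProduct_add, ← mulVec_mulVec, ← mulVec_mulVec]
      congr 1
      · exact dotmv A x (Aᵀ *ᵥ x)
      · exact dotmv' B (B *ᵥ x) x
    have ha : ((Aᵀ *ᵥ x) ⬝ᵥ (Aᵀ *ᵥ x) : ℝ) = 0 := by
      linarith [dot_self_nonneg (Aᵀ *ᵥ x), dot_self_nonneg (B *ᵥ x)]
    have hb : ((B *ᵥ x) ⬝ᵥ (B *ᵥ x) : ℝ) = 0 := by
      linarith [dot_self_nonneg (Aᵀ *ᵥ x), dot_self_nonneg (B *ᵥ x)]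
    exact ⟨dotProduct_self_eq_zero.1 ha, dotProduct_self_eq_zero.1 hb⟩
  -- G ⊥ C
  have hCinGperp : ∀ x ∈ C, x ∈ Gᗮ := by
    intro x hx
    obtain ⟨z, hz⟩ := (hC x).1 hx
    refine (Submodule.mem_orthogonal G _).2 ?_
    intro u hu
    obtain ⟨y, hy⟩ := (hG u).1 hu
    rw [real_inner_comm, inner_dot, ← hz, ← hy, dotmv B z (A *ᵥ y), mulVec_mulVec, hBA]
    simp
  have hGinCperp : ∀ x ∈ G, x ∈ Cᗮ := by
    intro x hx
    obtain ⟨y, hy⟩ := (hG x).1 hx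
    refine (Submodule.mem_orthogonal C _).2 ?_
    intro u hu
    obtain ⟨z, hz⟩ := (hC u).1 hu
    rw [inner_dot, ← hz, ← hy, dotmv B z (A *ᵥ y), mulVec_mulVec, hBA]
    simp
  -- G, C ⊆ Hᗮ
  have hGinHperp : ∀ x ∈ G, x ∈ Hᗮ := by
    intro x hx
    obtain ⟨y, hy⟩ := (hG x).1 hx
    refine (Submodule.mem_orthogonal H _).2 ?_
    intro u hu
    rw [real_inner_comm, inner_dot, ← hy, dotmv' A u y, (hHker u hu).1]
    simp
  have hCinHperp : ∀ x ∈ C, x ∈ Hᗮ := by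
    intro x hx
    obtain ⟨z, hz⟩ := (hC x).1 hx
    refine (Submodule.mem_orthogonal H _).2 ?_
    intro u hu
    rw [real_inner_comm, inner_dot, ← hz, dotmv B z u, (hHker u hu).2]
    simp
  set g : EuclideanSpace ℝ (Fin n) := WithLp.toLp 2 (A *ᵥ (fun i => Real.sin ((Aᵀ *ᵥ θ) i))) with hg
  set c : EuclideanSpace ℝ (Fin n) := WithLp.toLp 2 (Bᵀ *ᵥ (fun j => Real.sin ((B *ᵥ θ) j))) with hc
  have hgG : g ∈ G := (hG _).2 ⟨_, rfl⟩
  have hcC : c ∈ C := (hC _).2 ⟨_, rfl⟩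
  have hK : K θ = -g + -c := by simp [K, g, c, sub_eq_add_neg]
  have hAeq : Aᵀ *ᵥ θ = Aᵀ *ᵥ (Submodule.orthogonalProjectionOnto G θ : EuclideanSpace ℝ (Fin n)) := by
    have h0 : Aᵀ *ᵥ (θ - (Submodule.orthogonalProjectionOnto G θ : EuclideanSpace ℝ (Fin n))) = 0 :=
      hAtG _ (G.sub_starProjection_mem_orthogonal θ)
    rw [mulVec_sub] at h0
    exact sub_eq_zero.1 h0
  have hBeq : B *ᵥ θ = B *ᵥ (Submodule.orthogonalProjectionOnto C θ : EuclideanSpace ℝ (Fin n)) := by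
    have h0 : B *ᵥ (θ - (Submodule.orthogonalProjectionOnto C θ : EuclideanSpace ℝ (Fin n))) = 0 :=
      hBC _ (C.sub_starProjection_mem_orthogonal θ)
    rw [mulVec_sub] at h0
    exact sub_eq_zero.1 h0
  refine ⟨?_, ?_, ?_⟩
  · have h1 : (Submodule.orthogonalProjectionOnto G (K θ) : EuclideanSpace ℝ (Fin n)) = -g := by
      rw [hK, map_add, map_neg, map_neg, Submodule.coe_add, Submodule.coe_neg,
        Submodule.coe_neg, (congrArg Subtype.val (G.orthogonalProjectionOnto_mem_subspace_eq_self ⟨g, hgG⟩) : (G.orthogonalProjectionOnto g : EuclideanSpace ℝ (Fin n)) = g),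
        Submodule.orthogonalProjectionOnto_apply_of_mem_orthogonal (hCinGperp c hcC)]
      simp
    rw [h1, hg, hAeq]; rfl
  · have h1 : (Submodule.orthogonalProjectionOnto C (K θ) : EuclideanSpace ℝ (Fin n)) = -c := by
      rw [hK, map_add, map_neg, map_neg, Submodule.coe_add, Submodule.coe_neg,
        Submodule.coe_neg, (congrArg Subtype.val (C.orthogonalProjectionOnto_mem_subspace_eq_self ⟨c, hcC⟩) : (C.orthogonalProjectionOnto c : EuclideanSpace ℝ (Fin n)) = c),
        Submodule.orthogonalProjectionOnto_apply_of_mem_orthogonal (hGinCperp g hgG)]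
      simp
    rw [h1, hc, hBeq]; rfl
  · have hmem : K θ ∈ Hᗮ := by
      rw [hK]
      exact Submodule.add_mem _ (Submodule.neg_mem _ (hGinHperp g hgG))
        (Submodule.neg_mem _ (hCinHperp c hcC))
    rw [Submodule.orthogonalProjectionOnto_apply_of_mem_orthogonal hmem]
    simp
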